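/- Let A be a symmetric real n×n matrix with operator norm ‖A‖ > 0, b ∈ ℝⁿ, f(x) = (1/2)xᵀAx − xᵀb, g = Ax − b, and let d ∈ ℝⁿ with d ≠ 0, dᵀAd > 0 and dᵀg ≥ 0. Then for every α_u with 0 < α_u ≤ 2, the 'optapprox' adaptive step length ᾱ = α_u·‖A‖⁻¹·(dᵀg)/(dᵀd) satisfies ᾱ ≤ 2·(dᵀg)/(dᵀAd), and consequently f(x − ᾱd) ≤ f(x). -/

import Mathlib

open Matrix

lemma key_bound (n : ℕ) (A : Matrix (Fin n) (Fin n) ℝ) (d : Fin n → ℝ) :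
    d ⬝ᵥ A *ᵥ d ≤ ‖Matrix.toEuclideanCLM (𝕜 := ℝ) A‖ * (d ⬝ᵥ d) := by
  set T := Matrix.toEuclideanCLM (𝕜 := ℝ) A
  set dE : EuclideanSpace ℝ (Fin n) := (WithLp.equiv 2 _).symm d
  have h1 : d ⬝ᵥ A *ᵥ d = inner ℝ dE (T dE) := by
    simp [T, dE, EuclideanSpace.inner_eq_star_dotProduct, dotProduct_comm,
      Matrix.toLin'_apply, dotProduct, mul_comm]
  have h2 : d ⬝ᵥ d = ‖dE‖ ^ 2 := by
    rw [← real_inner_self_eq_norm_sq]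
    simp [dE, EuclideanSpace.inner_eq_star_dotProduct, dotProduct]
    rw [EuclideanSpace.norm_sq_eq]
    simp [sq]
  rw [h1, h2]
  calc inner ℝ dE (T dE) ≤ ‖dE‖ * ‖T dE‖ := real_inner_le_norm _ _
    _ ≤ ‖dE‖ * (‖T‖ * ‖dE‖) := by
        gcongr; exact T.le_opNorm dE
    _ = ‖T‖ * ‖dE‖ ^ 2 := by ring

theorem optapprox_step_decreases_cost (n : ℕ) (A : Matrix (Fin n) (Fin n) ℝ) (hA : A.IsSymm)
    (hN : 0 < ‖Matrix.toEuclideanCLM (𝕜 := ℝ) A‖)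
    (b : Fin n → ℝ) (f : (Fin n → ℝ) → ℝ)
    (hf : ∀ v, f v = (1 / 2) * (v ⬝ᵥ A *ᵥ v) - v ⬝ᵥ b)
    (x : Fin n → ℝ) (g : Fin n → ℝ) (hg : g = A *ᵥ x - b)
    (d : Fin n → ℝ) (hd0 : d ≠ 0) (hd : 0 < d ⬝ᵥ A *ᵥ d) (hdg : 0 ≤ d ⬝ᵥ g)
    (αu : ℝ) (hαu0 : 0 < αu) (hαu2 : αu ≤ 2) :
    αu * ‖Matrix.toEuclideanCLM (𝕜 := ℝ) A‖⁻¹ * ((d ⬝ᵥ g) / (d ⬝ᵥ d)) ≤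
      2 * (d ⬝ᵥ g) / (d ⬝ᵥ A *ᵥ d) ∧
    f (x - (αu * ‖Matrix.toEuclideanCLM (𝕜 := ℝ) A‖⁻¹ * ((d ⬝ᵥ g) / (d ⬝ᵥ d))) • d) ≤ f x := by
  have hdd : 0 < d ⬝ᵥ d := by
    have h0 : d ⬝ᵥ d ≠ 0 := fun h => hd0 (dotProduct_self_eq_zero.mp h)
    have h1 : 0 ≤ d ⬝ᵥ d := Finset.sum_nonneg fun i _ => mul_self_nonneg _
    exact lt_of_le_of_ne h1 (Ne.symm h0)
  set N := ‖Matrix.toEuclideanCLM (𝕜 := ℝ) A‖ with hNdef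
  set α := αu * N⁻¹ * ((d ⬝ᵥ g) / (d ⬝ᵥ d)) with hα
  have hbound : d ⬝ᵥ A *ᵥ d ≤ N * (d ⬝ᵥ d) := key_bound n A d
  have hα_nonneg : 0 ≤ α := by
    apply mul_nonneg (mul_nonneg hαu0.le (inv_nonneg.mpr hN.le))
    exact div_nonneg hdg hdd.le
  have hmain : α ≤ 2 * (d ⬝ᵥ g) / (d ⬝ᵥ A *ᵥ d) := by
    rw [hα, mul_div_assoc', div_le_div_iff₀ hdd hd]
    have h1 : αu * (d ⬝ᵥ A *ᵥ d) ≤ 2 * (N * (d ⬝ᵥ d)) := by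
      calc αu * (d ⬝ᵥ A *ᵥ d) ≤ 2 * (d ⬝ᵥ A *ᵥ d) := by gcongr
        _ ≤ 2 * (N * (d ⬝ᵥ d)) := by gcongr
    calc αu * N⁻¹ * (d ⬝ᵥ g) * (d ⬝ᵥ A *ᵥ d)
        = (N⁻¹ * (d ⬝ᵥ g)) * (αu * (d ⬝ᵥ A *ᵥ d)) := by ring
      _ ≤ (N⁻¹ * (d ⬝ᵥ g)) * (2 * (N * (d ⬝ᵥ d))) := by
          apply mul_le_mul_of_nonneg_left h1
          exact mul_nonneg (inv_nonneg.mpr hN.le) hdg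
      _ = (N⁻¹ * N) * (2 * (d ⬝ᵥ g) * (d ⬝ᵥ d)) := by ring
      _ = 2 * (d ⬝ᵥ g) * (d ⬝ᵥ d) := by rw [inv_mul_cancel₀ hN.ne']; ring
  refine ⟨hmain, ?_⟩
  -- symmetry fact
  have hsym : x ⬝ᵥ A *ᵥ d = d ⬝ᵥ A *ᵥ x := by
    rw [Matrix.dotProduct_mulVec, ← Matrix.mulVec_transpose, hA.eq, dotProduct_comm]
  have hexp : f (x - α • d) = f x - α * (d ⬝ᵥ g) + α ^ 2 / 2 * (d ⬝ᵥ A *ᵥ d) := by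
    simp only [hf, hg, Matrix.mulVec_sub, Matrix.mulVec_smul, sub_dotProduct,
      dotProduct_sub, smul_dotProduct, dotProduct_smul, smul_eq_mul]
    linear_combination (-α / 2) * hsym
  rw [hexp]
  have hkey : α * (d ⬝ᵥ A *ᵥ d) ≤ 2 * (d ⬝ᵥ g) := by
    have := mul_le_mul_of_nonneg_right hmain hd.le
    rwa [div_mul_cancel₀ _ hd.ne'] at this
  nlinarith [mul_le_mul_of_nonneg_left hkey hα_nonneg]
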